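/- Let A be a divided power algebra in characteristic p and let q: E → A be a differential bundle over A in the geometric tangent structure with lift λ: T°(E) → E. Then the image of the linear map D_λ = λ ∘ d: E → E is a submodule of E for the U(A)-module structure induced by q, and a·D_λ(e) = D_λ(q(a)e) for all a ∈ A, e ∈ E. -/
import Mathlib


open scoped TensorProduct

/-- Iterated product with respect to a bilinear multiplication:
`mpow mul a n = a^{*(n+1)}` (so `mpow mul a 0 = a`). -/
def mpow {F : Type} [Field F] {A : Type} [AddCommGroup A] [Module F A]
    (mul : A →ₗ[F] A →ₗ[F] A) (a : A) : ℕ → A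
  | 0 => a
  | n + 1 => mul (mpow mul a n) a

/-- A (non-unital) divided power algebra over a field `F` of characteristic `p`,
in Soublin's presentation: a commutative associative `F`-algebra together with a
`p`-th divided power operation satisfying `a^{*p} = 0`,
`(a+b)^[p] = a^[p] + b^[p] + ∑_{i=1}^{p-1} ((-1)^i/i) a^{*i} * b^{*(p-i)}`
and `(a*b)^[p] = 0`. -/
structure DPAlg (p : ℕ) (F : Type) [Field F] (A : Type) [AddCommGroup A] [Module F A] where
  mul : A →ₗ[F] A →ₗ[F] A
  mul_comm : ∀ a b, mul a b = mul b a
  mul_assoc : ∀ a b c, mul (mul a b) c = mul a (mul b c)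
  dpow : A → A
  dpow_smul : ∀ (c : F) (a : A), dpow (c • a) = c ^ p • dpow a
  pow_p : ∀ a, mpow mul a (p - 1) = 0
  dpow_add : ∀ a b, dpow (a + b) = dpow a + dpow b +
      ∑ i ∈ Finset.Ioo 0 p, ((-1 : F) ^ i * (i : F)⁻¹) •
        mul (mpow mul a (i - 1)) (mpow mul b (p - i - 1))
  dpow_mul : ∀ a b, dpow (mul a b) = 0

/-- Morphisms of divided power algebras. -/
structure DPHom {p : ℕ} {F : Type} [Field F] {A B : Type}
    [AddCommGroup A] [Module F A] [AddCommGroup B] [Module F B]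
    (S : DPAlg p F A) (T : DPAlg p F B) where
  toFun : A →ₗ[F] B
  map_mul : ∀ a b, toFun (S.mul a b) = T.mul (toFun a) (toFun b)
  map_dpow : ∀ a, toFun (S.dpow a) = T.dpow (toFun a)

/-- A divided power module over a divided power algebra `A`: a module over the
underlying (non-unital) commutative algebra `U(A)` together with a `p`-map `π`. -/
structure DPMod (p : ℕ) {F : Type} [Field F] {A : Type} [AddCommGroup A] [Module F A]
    (S : DPAlg p F A) (M : Type) [AddCommGroup M] [Module F M] where
  smul : A →ₗ[F] M →ₗ[F] M
  mul_smul : ∀ a b m, smul (S.mul a b) m = smul a (smul b m)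
  pmap : M → M
  pmap_add : ∀ m m', pmap (m + m') = pmap m + pmap m'
  pmap_smul : ∀ (c : F) m, pmap (c • m) = c ^ p • pmap m
  pmap_asmul : ∀ (a : A) (m : M), pmap (smul a m) = 0

/-- Let `q : A → E` be a differential bundle over `A` in the
geometric tangent structure, with lift `λ : T°(E) → E` (where `T°(E) = Γ⁺_E(Ω¹_E)`
has structural inclusion `pE` and universal special derivation `dE`), satisfying in
particular `λ ∘ T°(q) = q ∘ z`, i.e. `λ(pE(q a)) = q a` and `λ(dE(q a)) = 0`.  Then
the image of `D_λ = λ ∘ dE : E → E` is a `U(A)`-submodule of `E` (for the module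
structure induced by `q`), and `a · D_λ(e) = D_λ(q(a)e)`. -/
theorem image_of_Dlambda_is_submodule
    (p : ℕ) (hp : p.Prime) (F : Type) [Field F] [CharP F p]
    (A E TE : Type) [AddCommGroup A] [Module F A]
    [AddCommGroup E] [Module F E] [AddCommGroup TE] [Module F TE]
    (S : DPAlg p F A) (SE : DPAlg p F E) (q : DPHom S SE)
    (STE : DPAlg p F TE) (pE : DPHom SE STE) (dE : E →ₗ[F] TE)
    (hd1 : ∀ e e', dE (SE.mul e e') =
      STE.mul (pE.toFun e) (dE e') + STE.mul (pE.toFun e') (dE e))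
    (hd2 : ∀ e, dE (SE.dpow e) =
      - STE.mul (pE.toFun (mpow SE.mul e (p - 2))) (dE e))
    (lam : DPHom STE SE)
    (hlam1 : ∀ a, lam.toFun (pE.toFun (q.toFun a)) = q.toFun a)
    (hlam2 : ∀ a, lam.toFun (dE (q.toFun a)) = 0) :
    (∀ a e, SE.mul (q.toFun a) (lam.toFun (dE e)) =
      lam.toFun (dE (SE.mul (q.toFun a) e))) ∧
    (∀ a e, ∃ e', lam.toFun (dE e') =
      SE.mul (q.toFun a) (lam.toFun (dE e))) := by
  have key : ∀ a e, SE.mul (q.toFun a) (lam.toFun (dE e)) =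
      lam.toFun (dE (SE.mul (q.toFun a) e)) := by
    intro a e
    rw [hd1, map_add, lam.map_mul, lam.map_mul, hlam1, hlam2, map_zero, add_zero]
  exact ⟨key, fun a e => ⟨SE.mul (q.toFun a) e, (key a e).symm⟩⟩
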